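/- For n ≥ 1, the maximum size of a family F of subsets of [n] containing no (weak) copy of V and no (weak) copy of Λ equals 2·C(n−1, ⌊(n−1)/2⌋). Here V is the poset {a, b, c} with a < b and a < c, and Λ is the poset {a, b, c} with a > b and a > c. -/

import Mathlib

/-- The family `F` contains a (weak) copy of the poset `Q`: there is an injective
`g : Q → F` with `x < y` implying `g x ⊊ g y`. -/
def ContainsCopy (Q : Type*) [PartialOrder Q] {n : ℕ}
    (F : Finset (Finset (Fin n))) : Prop :=
  ∃ g : Q → Finset (Fin n), Function.Injective g ∧ (∀ x, g x ∈ F) ∧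
    ∀ x y : Q, x < y → g x ⊂ g y

/-- The three-element poset `V`, with `a < b`, `a < c`, and `b, c` incomparable. -/
inductive VT : Type
  | a | b | c
  deriving DecidableEq

instance : Fintype VT := ⟨{VT.a, VT.b, VT.c}, fun x => by cases x <;> first | decide | simp⟩

instance : PartialOrder VT where
  le x y := x = y ∨ x = VT.a
  le_refl x := Or.inl rfl
  le_trans := by
    intro x y z hxy hyz
    rcases hxy with rfl | h
    · exact hyz
    · exact Or.inr h
  le_antisymm := by
    intro x y hxy hyx
    rcases hxy with rfl | h
    · rfl
    · rcases hyx with h' | h'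
      · exact h'.symm
      · rw [h, h']

open Finset

namespace KT

variable {n : ℕ}

def seg (n m : ℕ) : Finset (Fin n) := univ.filter (fun i => (i : ℕ) < m)

lemma mem_seg {m : ℕ} {i : Fin n} : i ∈ seg n m ↔ (i : ℕ) < m := by
  simp [seg]

lemma seg_mono {m m' : ℕ} (h : m ≤ m') : seg n m ⊆ seg n m' := by
  intro i hi; rw [mem_seg] at *; omega

lemma card_seg {m : ℕ} (h : m ≤ n) : (seg n m).card = m := by
  rw [seg, ← Finset.card_range m]
  apply Finset.card_bij (fun (i : Fin n) _ => (i : ℕ))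
  · intro a ha; simp at ha ⊢; omega
  · intro a ha b hb hab; exact Fin.val_injective hab
  · intro b hb; simp at hb; exact ⟨⟨b, lt_of_lt_of_le hb h⟩, by simp [hb], rfl⟩

def chains (A : Finset (Fin n)) : Finset (Equiv.Perm (Fin n)) :=
  univ.filter (fun σ => (seg n A.card).image σ = A)

lemma mem_chains {A : Finset (Fin n)} {σ : Equiv.Perm (Fin n)} :
    σ ∈ chains A ↔ (seg n A.card).image σ = A := by simp [chains]

lemma chains_comparable {A B : Finset (Fin n)} {σ : Equiv.Perm (Fin n)}
    (hA : σ ∈ chains A) (hB : σ ∈ chains B) : A ⊆ B ∨ B ⊆ A := by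
  rw [mem_chains] at hA hB
  rcases le_total A.card B.card with h | h
  · left; rw [← hA, ← hB]; exact image_subset_image (seg_mono h)
  · right; rw [← hA, ← hB]; exact image_subset_image (seg_mono h)

noncomputable section

/-- Combine an equivalence on a finset with one on its complement into a permutation. -/
def glue (s t : Finset (Fin n)) (e : {x // x ∈ s} ≃ {x // x ∈ t})
    (f : {x // ¬ x ∈ s} ≃ {x // ¬ x ∈ t}) : Equiv.Perm (Fin n) :=
  ((Equiv.sumCompl (· ∈ s)).symm.trans ((e.sumCongr f).trans (Equiv.sumCompl (· ∈ t))))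

lemma glue_pos {s t : Finset (Fin n)} {e f} {x : Fin n} (hx : x ∈ s) :
    glue s t e f x = (e ⟨x, hx⟩ : Fin n) := by
  simp [glue, Equiv.sumCompl_symm_apply_of_pos hx]

lemma glue_neg {s t : Finset (Fin n)} {e f} {x : Fin n} (hx : ¬ x ∈ s) :
    glue s t e f x = (f ⟨x, hx⟩ : Fin n) := by
  simp [glue, Equiv.sumCompl_symm_apply_of_neg hx]

lemma card_chains_ge (A : Finset (Fin n)) :
    Nat.factorial A.card * Nat.factorial (n - A.card) ≤ (chains A).card := by
  classical
  set a := A.card with ha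
  have han : a ≤ n := by
    simpa using Finset.card_le_card (Finset.subset_univ A)
  have hcs : (seg n a).card = a := card_seg han
  -- the injection
  set Φ : ({x // x ∈ seg n a} ≃ {x // x ∈ A}) × ({x // ¬ x ∈ seg n a} ≃ {x // ¬ x ∈ A})
      → Equiv.Perm (Fin n) := fun p => glue (seg n a) A p.1 p.2 with hΦ
  have hmem : ∀ p, Φ p ∈ chains A := by
    intro ⟨e, f⟩
    rw [mem_chains]
    apply Finset.eq_of_subset_of_card_le
    · intro y hy
      rw [Finset.mem_image] at hy
      obtain ⟨x, hx, rfl⟩ := hy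
      rw [show Φ (e, f) x = (e ⟨x, hx⟩ : Fin n) from glue_pos hx]
      exact (e ⟨x, hx⟩).2
    · rw [Finset.card_image_of_injective _ (Φ (e, f)).injective, hcs]
  have hinj : Function.Injective Φ := by
    intro p q h
    have h' : ∀ x : Fin n, Φ p x = Φ q x := fun x => by rw [h]
    obtain ⟨e, f⟩ := p; obtain ⟨e', f'⟩ := q
    have he : e = e' := by
      apply Equiv.ext; rintro ⟨x, hx⟩
      apply Subtype.ext
      have := h' x
      rwa [glue_pos (e:=e) (f:=f) hx, glue_pos (e:=e') (f:=f') hx] at this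
    have hf : f = f' := by
      apply Equiv.ext; rintro ⟨x, hx⟩
      apply Subtype.ext
      have := h' x
      rwa [glue_neg (e:=e) (f:=f) hx, glue_neg (e:=e') (f:=f') hx] at this
    rw [Prod.mk.injEq]; exact ⟨he, hf⟩
  have := Fintype.card_le_of_injective (fun p => (⟨Φ p, hmem p⟩ : {σ // σ ∈ chains A}))
    (fun p q hpq => hinj (Subtype.ext_iff.mp hpq))
  rw [Fintype.card_coe] at this
  refine le_trans (le_of_eq ?_) this
  rw [Fintype.card_prod]
  have c1 : Fintype.card {x // x ∈ seg n a} = a := by rw [Fintype.card_coe, hcs]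
  have c2 : Fintype.card {x // x ∈ A} = a := by rw [Fintype.card_coe]
  have c3 : Fintype.card {x // ¬ x ∈ seg n a} = n - a := by
    rw [Fintype.card_subtype_compl, c1]; simp
  have c4 : Fintype.card {x // ¬ x ∈ A} = n - a := by
    rw [Fintype.card_subtype_compl, c2]; simp
  rw [Fintype.card_equiv (Fintype.equivOfCardEq (c1.trans c2.symm)),
    Fintype.card_equiv (Fintype.equivOfCardEq (c3.trans c4.symm)), c1, c3]

lemma card_chains_inter_le {A B : Finset (Fin n)} (hAB : A ⊆ B) :
    (chains A ∩ chains B).card ≤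
      Nat.factorial A.card * (Nat.factorial (B.card - A.card) * Nat.factorial (n - B.card)) := by
  classical
  set a := A.card with ha
  set b := B.card with hb
  have hab : a ≤ b := Finset.card_le_card hAB
  have hbn : b ≤ n := by simpa using Finset.card_le_card (Finset.subset_univ B)
  have hsA : (seg n a).card = a := card_seg (le_trans hab hbn)
  have hsB : (seg n b).card = b := card_seg hbn
  have hseg : seg n a ⊆ seg n b := seg_mono hab
  have key : ∀ σ ∈ chains A ∩ chains B,
      (∀ x ∈ seg n a, σ x ∈ A) ∧ (∀ x ∈ seg n b \ seg n a, σ x ∈ B \ A) ∧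
      (∀ x, ¬ x ∈ seg n b → ¬ σ x ∈ B) := by
    intro σ hσ
    rw [Finset.mem_inter, mem_chains, mem_chains] at hσ
    obtain ⟨hA, hB⟩ := hσ
    refine ⟨?_, ?_, ?_⟩
    · intro x hx; rw [← hA]; exact Finset.mem_image_of_mem σ hx
    · intro x hx
      rw [Finset.mem_sdiff] at hx ⊢
      constructor
      · rw [← hB]; exact Finset.mem_image_of_mem σ hx.1
      · intro hc
        rw [← hA, Finset.mem_image] at hc
        obtain ⟨y, hy, hyx⟩ := hc
        exact hx.2 (σ.injective hyx ▸ hy)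
    · intro x hx hc
      rw [← hB, Finset.mem_image] at hc
      obtain ⟨y, hy, hyx⟩ := hc
      exact hx (σ.injective hyx ▸ hy)
  set Ψ : {σ // σ ∈ chains A ∩ chains B} → ({x // x ∈ seg n a} ↪ {x // x ∈ A}) ×
    (({x // x ∈ seg n b \ seg n a} ↪ {x // x ∈ B \ A}) ×
     ({x // ¬ x ∈ seg n b} ↪ {x // ¬ x ∈ B})) := fun ⟨σ, hσ⟩ =>
    (⟨fun x => ⟨σ x, (key σ hσ).1 x x.2⟩,
        fun x y hxy => Subtype.ext (σ.injective (Subtype.ext_iff.mp hxy))⟩,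
     ⟨fun x => ⟨σ x, (key σ hσ).2.1 x x.2⟩,
        fun x y hxy => Subtype.ext (σ.injective (Subtype.ext_iff.mp hxy))⟩,
     ⟨fun x => ⟨σ x, (key σ hσ).2.2 x x.2⟩,
        fun x y hxy => Subtype.ext (σ.injective (Subtype.ext_iff.mp hxy))⟩) with hΨ
  have hinj : Function.Injective Ψ := by
    rintro ⟨σ, hσ⟩ ⟨τ, hτ⟩ h
    rw [hΨ, Prod.mk.injEq, Prod.mk.injEq] at h
    apply Subtype.ext
    apply Equiv.ext
    intro x
    by_cases h1 : x ∈ seg n a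
    · have := congrFun (congrArg (fun g => g.toFun) h.1) ⟨x, h1⟩
      exact Subtype.ext_iff.mp this
    · by_cases h2 : x ∈ seg n b
      · have hx : x ∈ seg n b \ seg n a := Finset.mem_sdiff.mpr ⟨h2, h1⟩
        have := congrFun (congrArg (fun g => g.toFun) h.2.1) ⟨x, hx⟩
        exact Subtype.ext_iff.mp this
      · have := congrFun (congrArg (fun g => g.toFun) h.2.2) ⟨x, h2⟩
        exact Subtype.ext_iff.mp this
  have hle := Fintype.card_le_of_injective Ψ hinj
  rw [Fintype.card_coe] at hle
  refine le_trans hle (le_of_eq ?_)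
  have cmidL : Fintype.card {x // x ∈ seg n b \ seg n a} = b - a := by
    rw [Fintype.card_coe, Finset.card_sdiff_of_subset hseg, hsA, hsB]
  have cmidR : Fintype.card {x // x ∈ B \ A} = b - a := by
    rw [Fintype.card_coe, Finset.card_sdiff_of_subset hAB]
  have ccoL : Fintype.card {x // ¬ x ∈ seg n b} = n - b := by
    rw [Fintype.card_subtype_compl, Fintype.card_coe, hsB]; simp
  have ccoR : Fintype.card {x // ¬ x ∈ B} = n - b := by
    rw [Fintype.card_subtype_compl, Fintype.card_coe]; simp [hb]
  rw [Fintype.card_prod, Fintype.card_prod,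
    Fintype.card_embedding_eq, Fintype.card_embedding_eq, Fintype.card_embedding_eq,
    Fintype.card_coe, Fintype.card_coe, hsA, cmidL, cmidR, ccoL, ccoR,
    Nat.descFactorial_self, Nat.descFactorial_self, Nat.descFactorial_self]

lemma le_choose {a b : ℕ} (ha : 1 ≤ a) (hab : a < b) : b ≤ Nat.choose b a := by
  induction b generalizing a with
  | zero => omega
  | succ b ih =>
    rcases eq_or_lt_of_le ha with rfl | h2
    · simp
    · obtain ⟨k, rfl⟩ : ∃ k, a = k + 1 := ⟨a - 1, by omega⟩
      rw [Nat.choose_succ_succ]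
      simp only [Nat.succ_eq_add_one]
      have h1 : b ≤ Nat.choose b k := ih (by omega) (by omega)
      have h3 : 0 < Nat.choose b (k + 1) := Nat.choose_pos (by omega)
      omega

lemma mid_fac {m x : ℕ} (h : x ≤ m) :
    Nat.factorial (m / 2) * Nat.factorial (m - m / 2)
      ≤ Nat.factorial x * Nat.factorial (m - x) := by
  have h1 := Nat.choose_le_middle x m
  have e1 : Nat.choose m x * (Nat.factorial x * Nat.factorial (m - x)) = Nat.factorial m := by
    rw [← Nat.choose_mul_factorial_mul_factorial h]; ring
  have e2 : Nat.choose m (m / 2) * (Nat.factorial (m / 2) * Nat.factorial (m - m / 2))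
      = Nat.factorial m := by
    rw [← Nat.choose_mul_factorial_mul_factorial (Nat.div_le_self m 2)]; ring
  have hpos : 0 < Nat.choose m (m / 2) := Nat.choose_pos (Nat.div_le_self m 2)
  have key : Nat.choose m (m / 2) * (Nat.factorial (m / 2) * Nat.factorial (m - m / 2))
      ≤ Nat.choose m (m / 2) * (Nat.factorial x * Nat.factorial (m - x)) := by
    rw [e2, ← e1]
    exact Nat.mul_le_mul_right _ h1
  exact Nat.le_of_mul_le_mul_left key hpos

lemma fac_le_fac_mid {m : ℕ} :
    Nat.factorial (m / 2) * Nat.factorial (m - m / 2) ≤ Nat.factorial m := by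
  have e2 : Nat.choose m (m / 2) * (Nat.factorial (m / 2) * Nat.factorial (m - m / 2))
      = Nat.factorial m := by
    rw [← Nat.choose_mul_factorial_mul_factorial (Nat.div_le_self m 2)]; ring
  have hpos : 0 < Nat.choose m (m / 2) := Nat.choose_pos (Nat.div_le_self m 2)
  calc Nat.factorial (m / 2) * Nat.factorial (m - m / 2)
      = 1 * (Nat.factorial (m / 2) * Nat.factorial (m - m / 2)) := (one_mul _).symm
    _ ≤ Nat.choose m (m / 2) * (Nat.factorial (m / 2) * Nat.factorial (m - m / 2)) :=
        Nat.mul_le_mul_right _ hpos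
    _ = Nat.factorial m := e2

lemma TleFac {n : ℕ} (hn : 1 ≤ n) :
    n * (Nat.factorial ((n - 1) / 2) * Nat.factorial ((n - 1) - (n - 1) / 2))
      ≤ Nat.factorial n := by
  calc n * (Nat.factorial ((n - 1) / 2) * Nat.factorial ((n - 1) - (n - 1) / 2))
      ≤ n * Nat.factorial (n - 1) := Nat.mul_le_mul_left _ fac_le_fac_mid
    _ = Nat.factorial n := by
        conv_rhs => rw [show n = (n - 1) + 1 by omega]
        rw [Nat.factorial_succ]; congr 1; omega

lemma N1 {n x : ℕ} (hn : 1 ≤ n) (hx : x ≤ n) :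
    n * (Nat.factorial ((n - 1) / 2) * Nat.factorial ((n - 1) - (n - 1) / 2))
      ≤ 2 * (Nat.factorial x * Nat.factorial (n - x)) := by
  set m := n - 1 with hm
  set Q := Nat.factorial (m / 2) * Nat.factorial (m - m / 2) with hQ
  by_cases hx0 : 1 ≤ x ∧ x ≤ m
  · obtain ⟨h1, h2⟩ := hx0
    obtain ⟨y, rfl⟩ : ∃ y, x = y + 1 := ⟨x - 1, by omega⟩
    have hf : Nat.factorial (n - (y + 1)) = (n - (y + 1)) * Nat.factorial (m - (y + 1)) := by
      rw [show n - (y + 1) = (m - (y + 1)) + 1 by omega, Nat.factorial_succ]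
    have e1 : Nat.factorial (y + 1) * Nat.factorial (n - (y + 1))
        = (n - (y + 1)) * (Nat.factorial (y + 1) * Nat.factorial (m - (y + 1))) := by
      rw [hf]; ring
    have e2 : Nat.factorial (y + 1) * Nat.factorial (n - (y + 1))
        = (y + 1) * (Nat.factorial y * Nat.factorial (m - y)) := by
      rw [show m - y = n - (y + 1) by omega, Nat.factorial_succ]; ring
    have P1 : Q ≤ Nat.factorial (y + 1) * Nat.factorial (m - (y + 1)) := mid_fac h2
    have P2 : Q ≤ Nat.factorial y * Nat.factorial (m - y) := mid_fac (by omega)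
    calc n * Q = ((n - (y + 1)) + (y + 1)) * Q := by rw [show (n - (y + 1)) + (y + 1) = n by omega]
      _ = (n - (y + 1)) * Q + (y + 1) * Q := add_mul _ _ _
      _ ≤ (n - (y + 1)) * (Nat.factorial (y + 1) * Nat.factorial (m - (y + 1)))
            + (y + 1) * (Nat.factorial y * Nat.factorial (m - y)) :=
          add_le_add (Nat.mul_le_mul_left _ P1) (Nat.mul_le_mul_left _ P2)
      _ = Nat.factorial (y + 1) * Nat.factorial (n - (y + 1))
            + Nat.factorial (y + 1) * Nat.factorial (n - (y + 1)) := by rw [← e1, ← e2]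
      _ = 2 * (Nat.factorial (y + 1) * Nat.factorial (n - (y + 1))) := by ring
  · have hcase : x = 0 ∨ x = n := by omega
    have hfx : Nat.factorial x * Nat.factorial (n - x) = Nat.factorial n := by
      rcases hcase with rfl | rfl
      · simp
      · simp
    rw [hfx]
    have h2 : n * Q ≤ Nat.factorial n := TleFac hn
    omega

lemma N2 {n a b : ℕ} (hn : 1 ≤ n) (hab : a < b) (hbn : b ≤ n) :
    n * (Nat.factorial ((n - 1) / 2) * Nat.factorial ((n - 1) - (n - 1) / 2))
      + Nat.factorial a * (Nat.factorial (b - a) * Nat.factorial (n - b))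
    ≤ Nat.factorial a * Nat.factorial (n - a) + Nat.factorial b * Nat.factorial (n - b) := by
  set m := n - 1 with hm
  set Q := Nat.factorial (m / 2) * Nat.factorial (m - m / 2) with hQ
  have hTn : n * Q ≤ Nat.factorial n := TleFac hn
  by_cases ha0 : a = 0
  · subst ha0
    simp only [Nat.factorial_zero, one_mul, Nat.sub_zero]
    exact add_le_add hTn (le_refl _)
  · by_cases hbn' : b = n
    · rw [hbn']
      rw [Nat.sub_self]
      simp only [Nat.factorial_zero, mul_one]
      omega
    · -- 1 ≤ a < b ≤ n - 1
      have ha1 : 1 ≤ a := by omega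
      have hbm : b ≤ m := by omega
      obtain ⟨c, rfl⟩ : ∃ c, b = c + 1 := ⟨b - 1, by omega⟩
      have hchoose : c + 1 ≤ Nat.choose (c + 1) a := le_choose ha1 hab
      have step1 : (c + 1) * (Nat.factorial a * Nat.factorial (c + 1 - a))
          ≤ Nat.factorial (c + 1) := by
        calc (c + 1) * (Nat.factorial a * Nat.factorial (c + 1 - a))
            ≤ Nat.choose (c + 1) a * (Nat.factorial a * Nat.factorial (c + 1 - a)) :=
              Nat.mul_le_mul_right _ hchoose
          _ = Nat.factorial (c + 1) := by
              rw [← Nat.choose_mul_factorial_mul_factorial (le_of_lt hab)]; ring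
      have step1' : Nat.factorial a * Nat.factorial (c + 1 - a) ≤ Nat.factorial c := by
        rw [Nat.factorial_succ] at step1
        exact Nat.le_of_mul_le_mul_left step1 (by omega)
      have P1 : Q ≤ Nat.factorial c * Nat.factorial (n - (c + 1)) := by
        have := mid_fac (m := m) (x := c) (by omega)
        rwa [show m - c = n - (c + 1) by omega] at this
      have P2 : Q ≤ Nat.factorial a * Nat.factorial (m - a) := mid_fac (by omega)
      have eb : Nat.factorial (c + 1) * Nat.factorial (n - (c + 1))
          = c * (Nat.factorial c * Nat.factorial (n - (c + 1)))
            + Nat.factorial c * Nat.factorial (n - (c + 1)) := by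
        rw [Nat.factorial_succ]; ring
      have hfa : Nat.factorial (n - a) = (n - a) * Nat.factorial (m - a) := by
        rw [show n - a = (m - a) + 1 by omega, Nat.factorial_succ]
      have ea : Nat.factorial a * Nat.factorial (n - a)
          = (n - a) * (Nat.factorial a * Nat.factorial (m - a)) := by
        rw [hfa]; ring
      have hsub : Nat.factorial a * (Nat.factorial (c + 1 - a) * Nat.factorial (n - (c + 1)))
          ≤ Nat.factorial c * Nat.factorial (n - (c + 1)) := by
        rw [← mul_assoc]
        exact Nat.mul_le_mul_right _ step1'
      calc n * Q + Nat.factorial a * (Nat.factorial (c + 1 - a) * Nat.factorial (n - (c + 1)))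
          ≤ ((n - a) + c) * Q
              + Nat.factorial c * Nat.factorial (n - (c + 1)) := by
            apply add_le_add _ hsub
            apply Nat.mul_le_mul_right
            omega
        _ = (n - a) * Q + (c * Q + Nat.factorial c * Nat.factorial (n - (c + 1))) := by ring
        _ ≤ (n - a) * (Nat.factorial a * Nat.factorial (m - a))
              + (c * (Nat.factorial c * Nat.factorial (n - (c + 1)))
                + Nat.factorial c * Nat.factorial (n - (c + 1))) := by
            apply add_le_add (Nat.mul_le_mul_left _ P2)
            exact add_le_add (Nat.mul_le_mul_left _ P1) (le_refl _)
        _ = Nat.factorial a * Nat.factorial (n - a)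
              + Nat.factorial (c + 1) * Nat.factorial (n - (c + 1)) := by
            rw [← ea, ← eb]

end

section Upper

variable {n : ℕ} {F : Finset (Finset (Fin n))}

lemma vt_lt_iff {x y : VT} : x < y ↔ x = VT.a ∧ y ≠ VT.a := by
  constructor
  · intro hxy
    obtain ⟨hle, hnle⟩ := lt_iff_le_not_ge.mp hxy
    rcases hle with rfl | rfl
    · exact absurd (Or.inl rfl) hnle
    · refine ⟨rfl, fun h => hnle (Or.inr h)⟩
  · rintro ⟨rfl, hy⟩
    refine lt_iff_le_not_ge.mpr ⟨Or.inr rfl, fun h => ?_⟩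
    rcases h with h | h <;> exact hy h

def tri {n : ℕ} (A B C : Finset (Fin n)) : VT → Finset (Fin n)
  | .a => A
  | .b => B
  | .c => C

lemma tri_inj {n : ℕ} {A B C : Finset (Fin n)} (hAB : A ≠ B) (hAC : A ≠ C) (hBC : B ≠ C) :
    Function.Injective (tri A B C) := by
  intro x y hxy
  cases x <;> cases y <;> simp only [tri] at hxy <;>
    first
      | rfl
      | exact absurd hxy hAB
      | exact absurd hxy hAC
      | exact absurd hxy hBC
      | exact absurd hxy.symm hAB
      | exact absurd hxy.symm hAC
      | exact absurd hxy.symm hBC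

lemma tri_mem {n : ℕ} {A B C : Finset (Fin n)} {F : Finset (Finset (Fin n))}
    (hA : A ∈ F) (hB : B ∈ F) (hC : C ∈ F) : ∀ v, tri A B C v ∈ F := by
  intro v
  cases v
  · exact hA
  · exact hB
  · exact hC

lemma noV (hV : ¬ContainsCopy VT F) {A B C : Finset (Fin n)}
    (hA : A ∈ F) (hB : B ∈ F) (hC : C ∈ F) (h1 : A ⊂ B) (h2 : A ⊂ C) : B = C := by
  by_contra hBC
  apply hV
  refine ⟨tri A B C, tri_inj h1.ne h2.ne hBC, tri_mem hA hB hC, ?_⟩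
  intro x y hxy
  obtain ⟨rfl, hy⟩ := vt_lt_iff.mp hxy
  cases y
  · exact absurd rfl hy
  · exact h1
  · exact h2

lemma noL (hL : ¬ContainsCopy VTᵒᵈ F) {A B C : Finset (Fin n)}
    (hA : A ∈ F) (hB : B ∈ F) (hC : C ∈ F) (h1 : B ⊂ A) (h2 : C ⊂ A) : B = C := by
  by_contra hBC
  apply hL
  refine ⟨tri A B C ∘ OrderDual.ofDual,
    (tri_inj h1.ne' h2.ne' hBC).comp (OrderDual.ofDual).injective,
    fun x => tri_mem hA hB hC (OrderDual.ofDual x), ?_⟩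
  intro x y hxy
  have hlt : OrderDual.ofDual y < OrderDual.ofDual x := hxy
  obtain ⟨hya, hxa⟩ := vt_lt_iff.mp hlt
  show tri A B C (OrderDual.ofDual x) ⊂ tri A B C (OrderDual.ofDual y)
  rw [hya]
  cases hx : OrderDual.ofDual x
  · exact absurd hx hxa
  · exact h1
  · exact h2

def upF (F : Finset (Finset (Fin n))) (X : Finset (Fin n)) : Finset (Finset (Fin n)) :=
  F.filter (fun Y => X ⊂ Y)

def RF (F : Finset (Finset (Fin n))) : Finset (Finset (Fin n)) :=
  F.filter (fun X => ¬ ∃ Y ∈ F, Y ⊂ X)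

noncomputable def SF (F : Finset (Finset (Fin n))) (X : Finset (Fin n)) :
    Finset (Equiv.Perm (Fin n)) :=
  chains X ∪ (upF F X).biUnion chains

lemma mem_SF {X : Finset (Fin n)} {σ : Equiv.Perm (Fin n)} :
    σ ∈ SF F X ↔ σ ∈ chains X ∨ ∃ Y, (Y ∈ F ∧ X ⊂ Y) ∧ σ ∈ chains Y := by
  simp [SF, upF, Finset.mem_biUnion, Finset.mem_filter, and_assoc]

lemma disj_aux (hL : ¬ContainsCopy VTᵒᵈ F) {X₁ X₂ U V : Finset (Fin n)}
    (h1F : X₁ ∈ F) (h2F : X₂ ∈ F)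
    (h1min : ∀ Y ∈ F, ¬ Y ⊂ X₁) (h2min : ∀ Y ∈ F, ¬ Y ⊂ X₂)
    (hne : X₁ ≠ X₂)
    (hU : U = X₁ ∨ (U ∈ F ∧ X₁ ⊂ U)) (hV : V = X₂ ∨ (V ∈ F ∧ X₂ ⊂ V))
    (hUV : U ⊆ V) : False := by
  have hUF : U ∈ F := by rcases hU with rfl | ⟨h, _⟩; exacts [h1F, h]
  rcases eq_or_lt_of_le (Finset.le_iff_subset.mpr hUV) with rfl | hss'
  case inr =>
    have hss : U ⊂ V := hss'
    -- U ⊂ V : U must equal X₂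
    have hUX2 : U = X₂ := by
      rcases hV with rfl | ⟨hVF, hXV⟩
      · exact absurd hss (h2min U hUF)
      · exact noL hL hVF hUF h2F hss hXV
    rcases hU with rfl | ⟨_, hXU⟩
    · exact hne hUX2
    · exact h2min X₁ h1F (hUX2 ▸ hXU)
  case inl =>
    rcases hU with rfl | ⟨_, hXU⟩
    · rcases hV with rfl | ⟨_, hXV⟩
      · exact hne rfl
      · exact h1min X₂ h2F hXV
    · rcases hV with rfl | ⟨_, hXV⟩
      · exact h2min X₁ h1F hXU
      · exact hne (noL hL hUF h1F h2F hXU hXV)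

lemma upper (hn : 1 ≤ n) (hV : ¬ContainsCopy VT F) (hL : ¬ContainsCopy VTᵒᵈ F) :
    F.card ≤ 2 * Nat.choose (n - 1) ((n - 1) / 2) := by
  classical
  set T := n * (Nat.factorial ((n - 1) / 2) * Nat.factorial ((n - 1) - (n - 1) / 2)) with hT
  have hRsub : RF F ⊆ F := Finset.filter_subset _ _
  -- each up-set has at most one element
  have hupcard : ∀ X ∈ F, (upF F X).card ≤ 1 := by
    intro X hX
    rw [Finset.card_le_one]
    intro Y1 hY1 Y2 hY2
    rw [upF, Finset.mem_filter] at hY1 hY2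
    exact noV hV hX hY1.1 hY2.1 hY1.2 hY2.2
  -- disjointness of the SF sets over RF
  have hdisj : ∀ X₁ ∈ RF F, ∀ X₂ ∈ RF F, X₁ ≠ X₂ → Disjoint (SF F X₁) (SF F X₂) := by
    intro X₁ h1 X₂ h2 hne
    rw [Finset.disjoint_left]
    intro σ hσ1 hσ2
    rw [RF, Finset.mem_filter] at h1 h2
    obtain ⟨h1F, h1min⟩ := h1
    obtain ⟨h2F, h2min⟩ := h2
    push_neg at h1min h2min
    rw [mem_SF] at hσ1 hσ2
    obtain ⟨U, hU, hσU⟩ : ∃ U, (U = X₁ ∨ (U ∈ F ∧ X₁ ⊂ U)) ∧ σ ∈ chains U := by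
      rcases hσ1 with h | ⟨Y, hY, hσ⟩
      · exact ⟨X₁, Or.inl rfl, h⟩
      · exact ⟨Y, Or.inr hY, hσ⟩
    obtain ⟨W, hW, hσW⟩ : ∃ W, (W = X₂ ∨ (W ∈ F ∧ X₂ ⊂ W)) ∧ σ ∈ chains W := by
      rcases hσ2 with h | ⟨Y, hY, hσ⟩
      · exact ⟨X₂, Or.inl rfl, h⟩
      · exact ⟨Y, Or.inr hY, hσ⟩
    rcases chains_comparable hσU hσW with hc | hc
    · exact disj_aux hL h1F h2F h1min h2min hne hU hW hc
    · exact disj_aux hL h2F h1F h2min h1min hne.symm hW hU hc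
  -- per-component bound
  have hScard : ∀ X ∈ F, T * (1 + (upF F X).card) ≤ 2 * (SF F X).card := by
    intro X hX
    have hXn : X.card ≤ n := by simpa using Finset.card_le_card (Finset.subset_univ X)
    rcases Nat.le_one_iff_eq_zero_or_eq_one.mp (hupcard X hX) with h0 | h1
    · have hupe : upF F X = ∅ := Finset.card_eq_zero.mp h0
      have hSX : SF F X = chains X := by rw [SF, hupe]; simp
      rw [h0, hSX]
      calc T * (1 + 0) = T := by ring
        _ ≤ 2 * (Nat.factorial X.card * Nat.factorial (n - X.card)) := N1 hn hXn
        _ ≤ 2 * (chains X).card := Nat.mul_le_mul_left _ (card_chains_ge X)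
    · obtain ⟨Y, hY⟩ := Finset.card_eq_one.mp h1
      have hYmem : Y ∈ upF F X := hY ▸ Finset.mem_singleton_self Y
      rw [upF, Finset.mem_filter] at hYmem
      obtain ⟨hYF, hXY⟩ := hYmem
      have hYn : Y.card ≤ n := by simpa using Finset.card_le_card (Finset.subset_univ Y)
      have hXYc : X.card < Y.card := Finset.card_lt_card hXY
      have hSX : SF F X = chains X ∪ chains Y := by rw [SF, hY]; simp
      have hcui := Finset.card_union_add_card_inter (chains X) (chains Y)
      have hint := card_chains_inter_le (subset_of_ssubset hXY)
      have hcX := card_chains_ge X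
      have hcY := card_chains_ge Y
      have hN2 := N2 hn hXYc hYn
      have hmain : T + (chains X ∩ chains Y).card
          ≤ (chains X ∪ chains Y).card + (chains X ∩ chains Y).card := by
        rw [hcui]
        calc T + (chains X ∩ chains Y).card
            ≤ T + Nat.factorial X.card
                * (Nat.factorial (Y.card - X.card) * Nat.factorial (n - Y.card)) :=
              Nat.add_le_add_left hint _
          _ ≤ Nat.factorial X.card * Nat.factorial (n - X.card)
                + Nat.factorial Y.card * Nat.factorial (n - Y.card) := hN2
          _ ≤ (chains X).card + (chains Y).card := add_le_add hcX hcY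
      rw [h1, hSX]
      omega
  -- sum decomposition of |F|
  have hFR : F \ RF F = (RF F).biUnion (upF F) := by
    ext Y
    simp only [Finset.mem_sdiff, Finset.mem_biUnion, RF, upF, Finset.mem_filter]
    constructor
    · rintro ⟨hYF, hnR⟩
      have hex : ∃ Z ∈ F, Z ⊂ Y := by
        by_contra hno
        exact hnR ⟨hYF, hno⟩
      obtain ⟨Z, hZF, hZY⟩ := hex
      refine ⟨Z, ⟨hZF, ?_⟩, hYF, hZY⟩
      rintro ⟨W, hWF, hWZ⟩
      exact hZY.ne (noV hV hWF hZF hYF hWZ (hWZ.trans hZY))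
    · rintro ⟨X, ⟨hXF, _⟩, hYF, hXY⟩
      exact ⟨hYF, fun h => h.2 ⟨X, hXF, hXY⟩⟩
  have hdisj_up : ∀ X₁ ∈ RF F, ∀ X₂ ∈ RF F, X₁ ≠ X₂ → Disjoint (upF F X₁) (upF F X₂) := by
    intro X₁ h1 X₂ h2 hne
    rw [Finset.disjoint_left]
    intro Y hY1 hY2
    rw [upF, Finset.mem_filter] at hY1 hY2
    rw [RF, Finset.mem_filter] at h1 h2
    exact hne (noL hL hY1.1 h1.1 h2.1 hY1.2 hY2.2)
  have hFcard : F.card = ∑ X ∈ RF F, (1 + (upF F X).card) := by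
    rw [Finset.sum_add_distrib, Finset.sum_const, smul_eq_mul, mul_one,
      ← Finset.card_biUnion hdisj_up, ← hFR]
    have := Finset.card_sdiff_add_card_eq_card hRsub
    omega
  -- the global count
  have hmain : T * F.card ≤ 2 * Nat.factorial n := by
    calc T * F.card = ∑ X ∈ RF F, T * (1 + (upF F X).card) := by
          rw [hFcard, Finset.mul_sum]
      _ ≤ ∑ X ∈ RF F, 2 * (SF F X).card :=
          Finset.sum_le_sum (fun X hX => hScard X (hRsub hX))
      _ = 2 * ∑ X ∈ RF F, (SF F X).card := by rw [Finset.mul_sum]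
      _ = 2 * ((RF F).biUnion (SF F)).card := by rw [Finset.card_biUnion hdisj]
      _ ≤ 2 * Fintype.card (Equiv.Perm (Fin n)) :=
          Nat.mul_le_mul_left _ (by
            rw [← Finset.card_univ]
            exact Finset.card_le_card (Finset.subset_univ _))
      _ = 2 * Nat.factorial n := by rw [Fintype.card_perm, Fintype.card_fin]
  have hfac : 2 * Nat.factorial n = T * (2 * Nat.choose (n - 1) ((n - 1) / 2)) := by
    have h1 : Nat.choose (n - 1) ((n - 1) / 2)
        * (Nat.factorial ((n - 1) / 2) * Nat.factorial ((n - 1) - (n - 1) / 2))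
        = Nat.factorial (n - 1) := by
      rw [← Nat.choose_mul_factorial_mul_factorial (Nat.div_le_self (n - 1) 2)]; ring
    have h2 : Nat.factorial n = n * Nat.factorial (n - 1) := by
      conv_lhs => rw [show n = (n - 1) + 1 by omega]
      rw [Nat.factorial_succ]
      congr 1
      omega
    rw [hT, h2, ← h1]; ring
  have hTpos : 0 < T := by
    rw [hT]
    exact Nat.mul_pos (by omega) (Nat.mul_pos (Nat.factorial_pos _) (Nat.factorial_pos _))
  rw [hfac] at hmain
  exact Nat.le_of_mul_le_mul_left hmain hTpos

lemma exists_of_containsV (h : ContainsCopy VT F) :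
    ∃ A ∈ F, ∃ B ∈ F, ∃ C ∈ F, A ⊂ B ∧ A ⊂ C ∧ B ≠ C := by
  obtain ⟨g, hinj, hmem, hlt⟩ := h
  refine ⟨g .a, hmem _, g .b, hmem _, g .c, hmem _, ?_, ?_, ?_⟩
  · exact hlt _ _ (vt_lt_iff.mpr ⟨rfl, fun h => VT.noConfusion h⟩)
  · exact hlt _ _ (vt_lt_iff.mpr ⟨rfl, fun h => VT.noConfusion h⟩)
  · exact fun h => VT.noConfusion (hinj h)

lemma exists_of_containsL (h : ContainsCopy VTᵒᵈ F) :
    ∃ A ∈ F, ∃ B ∈ F, ∃ C ∈ F, B ⊂ A ∧ C ⊂ A ∧ B ≠ C := by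
  obtain ⟨g, hinj, hmem, hlt⟩ := h
  refine ⟨g (OrderDual.toDual .a), hmem _, g (OrderDual.toDual .b), hmem _,
    g (OrderDual.toDual .c), hmem _, ?_, ?_, ?_⟩
  · exact hlt _ _ (OrderDual.toDual_lt_toDual.mpr
      (vt_lt_iff.mpr ⟨rfl, fun h => VT.noConfusion h⟩))
  · exact hlt _ _ (OrderDual.toDual_lt_toDual.mpr
      (vt_lt_iff.mpr ⟨rfl, fun h => VT.noConfusion h⟩))
  · exact fun h => VT.noConfusion (OrderDual.toDual.injective (hinj h))

lemma lower (hn : 1 ≤ n) : ∃ F : Finset (Finset (Fin n)),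
    ¬ContainsCopy VT F ∧ ¬ContainsCopy VTᵒᵈ F ∧
    F.card = 2 * Nat.choose (n - 1) ((n - 1) / 2) := by
  classical
  set k := (n - 1) / 2 with hk
  set ℓ : Fin n := ⟨n - 1, by omega⟩ with hℓ
  set base : Finset (Fin n) := Finset.univ.erase ℓ with hbase
  have hbc : base.card = n - 1 := by
    rw [hbase, Finset.card_erase_of_mem (Finset.mem_univ _), Finset.card_univ, Fintype.card_fin]
  set G := base.powersetCard k with hG
  have hGmem : ∀ S ∈ G, S ⊆ base ∧ S.card = k := fun S hS => Finset.mem_powersetCard.mp hS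
  have hGnl : ∀ S ∈ G, ℓ ∉ S := by
    intro S hS hls
    exact (Finset.mem_erase.mp ((hGmem S hS).1 hls)).1 rfl
  set F := G ∪ G.image (insert ℓ) with hF
  have hmemF : ∀ A, A ∈ F ↔ A ∈ G ∨ ∃ S ∈ G, A = insert ℓ S := by
    intro A
    rw [hF, Finset.mem_union, Finset.mem_image]
    constructor <;> rintro (h | ⟨S, hS, h⟩)
    · exact Or.inl h
    · exact Or.inr ⟨S, hS, h.symm⟩
    · exact Or.inl h
    · exact Or.inr ⟨S, hS, h.symm⟩
  have hss : ∀ A ∈ F, ∀ B ∈ F, A ⊂ B → A ∈ G ∧ B = insert ℓ A := by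
    intro A hA B hB hAB
    rw [hmemF] at hA hB
    rcases hA with hA | ⟨S, hS, rfl⟩
    · rcases hB with hB | ⟨S', hS', rfl⟩
      · exact absurd (Finset.card_lt_card hAB)
          (by rw [(hGmem A hA).2, (hGmem B hB).2]; exact lt_irrefl k)
      · have hsub : A ⊆ S' :=
          (Finset.subset_insert_iff_of_notMem (hGnl A hA)).mp hAB.subset
        have hAS : A = S' := Finset.eq_of_subset_of_card_le hsub
          (by rw [(hGmem A hA).2, (hGmem S' hS').2])
        exact ⟨hA, by rw [hAS]⟩
    · exfalso
      have hlA : ℓ ∈ insert ℓ S := Finset.mem_insert_self _ _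
      rcases hB with hB | ⟨S', hS', rfl⟩
      · exact hGnl B hB (hAB.subset hlA)
      · have c1 : (insert ℓ S).card = k + 1 := by
          rw [Finset.card_insert_of_notMem (hGnl S hS), (hGmem S hS).2]
        have c2 : (insert ℓ S').card = k + 1 := by
          rw [Finset.card_insert_of_notMem (hGnl S' hS'), (hGmem S' hS').2]
        have := Finset.card_lt_card hAB
        omega
  refine ⟨F, ?_, ?_, ?_⟩
  · intro h
    obtain ⟨A, hA, B, hB, C, hC, h1, h2, hBC⟩ := exists_of_containsV h
    obtain ⟨_, e1⟩ := hss A hA B hB h1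
    obtain ⟨_, e2⟩ := hss A hA C hC h2
    exact hBC (e1.trans e2.symm)
  · intro h
    obtain ⟨A, hA, B, hB, C, hC, h1, h2, hBC⟩ := exists_of_containsL h
    obtain ⟨hBG, e1⟩ := hss B hB A hA h1
    obtain ⟨hCG, e2⟩ := hss C hC A hA h2
    apply hBC
    have he : insert ℓ B = insert ℓ C := e1.symm.trans e2
    calc B = (insert ℓ B).erase ℓ := (Finset.erase_insert (hGnl B hBG)).symm
      _ = (insert ℓ C).erase ℓ := by rw [he]
      _ = C := Finset.erase_insert (hGnl C hCG)
  · have hdisj : Disjoint G (G.image (insert ℓ)) := by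
      rw [Finset.disjoint_left]
      intro S hS hS'
      obtain ⟨S', hS'G, hEq⟩ := Finset.mem_image.mp hS'
      exact hGnl S hS (hEq ▸ Finset.mem_insert_self ℓ S')
    have hinj : Set.InjOn (insert ℓ) (G : Set (Finset (Fin n))) := by
      intro S hS S' hS' hEq
      calc S = (insert ℓ S).erase ℓ := (Finset.erase_insert (hGnl S hS)).symm
        _ = (insert ℓ S').erase ℓ := by rw [hEq]
        _ = S' := Finset.erase_insert (hGnl S' hS')
    rw [hF, Finset.card_union_of_disjoint hdisj, Finset.card_image_of_injOn hinj, hG,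
      Finset.card_powersetCard, hbc]
    ring

end Upper

end KT

/-- Katona–Tarján. For `n ≥ 1`, the maximum size of a family of
subsets of `[n]` containing no weak copy of `V` and no weak copy of `Λ` (the dual
of `V`) is `2·C(n−1, ⌊(n−1)/2⌋)`. -/
theorem la_V_Lambda (n : ℕ) (hn : 1 ≤ n) :
    sSup {m | ∃ F : Finset (Finset (Fin n)),
        ¬ContainsCopy VT F ∧ ¬ContainsCopy VTᵒᵈ F ∧ F.card = m}
      = 2 * (n - 1).choose ((n - 1) / 2) := by

  apply le_antisymm
  · apply csSup_le
    · obtain ⟨F, h1, h2, h3⟩ := KT.lower hn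
      exact ⟨_, F, h1, h2, h3⟩
    · rintro m ⟨F, h1, h2, rfl⟩
      exact KT.upper hn h1 h2
  · apply le_csSup
    · refine ⟨2 * Nat.choose (n - 1) ((n - 1) / 2), ?_⟩
      rintro m ⟨F, h1, h2, rfl⟩
      exact KT.upper hn h1 h2
    · obtain ⟨F, h1, h2, h3⟩ := KT.lower hn
      exact ⟨F, h1, h2, h3⟩
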